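/- Let k be a field, V a category equipped with a preadditive structure and a k-linear structure, G a group, and θ : G × G → kˣ a normalized 2-cochain. Consider the projective 2-representation of G on V given by ρ(g) = 𝟭_V, ψ_{g,h} = θ(g,h) • id, ψ₁ = id, with cocycle α = dθ. Then for all g, h ∈ G, the categorical character map β_{g,h} : X(g) → X(hgh⁻¹) (where X(g) is the space of natural transformations 𝟭_V ⟶ 𝟭_V for every g) is multiplication by the scalar θ(h, g) · θ(h·g·h⁻¹, h)⁻¹. In particular, if g and h commute, then β_{g,h} is multiplication by θ(h, g) / θ(g, h), so the joint trace of the pair (g,h) equals θ(h,g)/θ(g,h) times the dimension of X(g) when X(g) is finite dimensional. -/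

import Mathlib

open CategoryTheory

variable {k : Type*} [Field k] {G : Type*} [Group G]
variable {V : Type*} [Category V] [Preadditive V] [CategoryTheory.Linear k V]

/-- The categorical character structure map `β_{g,h} : X(g) → X(hgh⁻¹)`, sending a
natural transformation `η : 𝟭 V ⟶ ρ g` to the composite described by the string
diagram defining the categorical character. -/
def charBeta (ρ : G → V ⥤ V) (ψ : ∀ g h : G, ρ h ⋙ ρ g ≅ ρ (g * h))
    (ψ₁ : ρ 1 ≅ 𝟭 V) (g h : G) (η : 𝟭 V ⟶ ρ g) : 𝟭 V ⟶ ρ (h * g * h⁻¹) :=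
  ψ₁.inv ≫
  eqToHom (show ρ 1 = ρ (h * h⁻¹) by rw [mul_inv_cancel]) ≫
  (ψ h h⁻¹).inv ≫
  Functor.whiskerLeft (ρ h⁻¹) (Functor.whiskerRight η (ρ h)) ≫
  Functor.whiskerLeft (ρ h⁻¹) (ψ h g).hom ≫
  eqToHom (show ρ h⁻¹ ⋙ ρ (h * g) = ρ h⁻¹ ⋙ ρ (h * g * h⁻¹ * h) by
    rw [inv_mul_cancel_right]) ≫
  Functor.whiskerLeft (ρ h⁻¹) (ψ (h * g * h⁻¹) h).inv ≫
  Functor.whiskerRight (ψ h h⁻¹).hom (ρ (h * g * h⁻¹)) ≫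
  eqToHom (show ρ (h * h⁻¹) ⋙ ρ (h * g * h⁻¹) = ρ 1 ⋙ ρ (h * g * h⁻¹) by
    rw [mul_inv_cancel]) ≫
  Functor.whiskerRight ψ₁.hom (ρ (h * g * h⁻¹))

/-- The coherence isomorphism `ψ_{g,h} = θ(g,h) • id` of the projective
2-representation of `G` on `V` given by a 2-cochain `θ`. -/
def thetaPsi (θ : G → G → kˣ) (g h : G) :
    ((fun _ : G => 𝟭 V) h) ⋙ ((fun _ : G => 𝟭 V) g) ≅ ((fun _ : G => 𝟭 V) (g * h)) where
  hom := ((θ g h : kˣ) : k) • 𝟙 (𝟭 V)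
  inv := (((θ g h)⁻¹ : kˣ) : k) • 𝟙 (𝟭 V)
  hom_inv_id := by
    ext X
    simp [smul_smul]
  inv_hom_id := by
    ext X
    simp [smul_smul]

/-- For the projective 2-representation `ρ(g) = 𝟭 V`, `ψ_{g,h} = θ(g,h) • id`,
`ψ₁ = id` associated to a normalised 2-cochain `θ`, the categorical character map
`β_{g,h} : X(g) → X(hgh⁻¹)` is multiplication by `θ(h,g) · θ(hgh⁻¹,h)⁻¹`.  In
particular, if `g` and `h` commute then `β_{g,h}` is multiplication by
`θ(h,g)/θ(g,h)`, and the joint trace of `(g,h)` is `θ(h,g)/θ(g,h)` times the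
dimension of `X(g)` when `X(g)` is finite dimensional. -/
theorem trivial_rep_char {k : Type*} [Field k] {G : Type*} [Group G]
    {V : Type*} [Category V] [Preadditive V] [CategoryTheory.Linear k V]
    (θ : G → G → kˣ) (hθ : ∀ g : G, θ 1 g = 1 ∧ θ g 1 = 1) (g h : G) :
    (∀ η : 𝟭 V ⟶ (𝟭 V : V ⥤ V),
      charBeta (fun _ : G => 𝟭 V) (thetaPsi θ) (Iso.refl (𝟭 V)) g h η =
        ((θ h g * (θ (h * g * h⁻¹) h)⁻¹ : kˣ) : k) • η) ∧
    (g * h = h * g →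
      (∀ η : 𝟭 V ⟶ (𝟭 V : V ⥤ V),
        charBeta (fun _ : G => 𝟭 V) (thetaPsi θ) (Iso.refl (𝟭 V)) g h η =
          ((θ h g * (θ g h)⁻¹ : kˣ) : k) • η) ∧
      (∀ _ : FiniteDimensional k (𝟭 V ⟶ (𝟭 V : V ⥤ V)),
        LinearMap.trace k (𝟭 V ⟶ (𝟭 V : V ⥤ V))
            (((θ h g * (θ g h)⁻¹ : kˣ) : k) •
              (LinearMap.id : (𝟭 V ⟶ (𝟭 V : V ⥤ V)) →ₗ[k] (𝟭 V ⟶ (𝟭 V : V ⥤ V)))) =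
          ((θ h g * (θ g h)⁻¹ : kˣ) : k) *
            (Module.finrank k (𝟭 V ⟶ (𝟭 V : V ⥤ V)) : k))) := by
  have key : ∀ η : 𝟭 V ⟶ (𝟭 V : V ⥤ V),
      charBeta (fun _ : G => 𝟭 V) (thetaPsi θ) (Iso.refl (𝟭 V)) g h η =
        ((θ h g * (θ (h * g * h⁻¹) h)⁻¹ : kˣ) : k) • η := by
    intro η
    ext X
    simp [charBeta, thetaPsi, smul_smul, NatTrans.comp_app]
    ring_nf
    rw [mul_inv_cancel₀ (Units.ne_zero _), one_mul, mul_comm]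
  refine ⟨key, fun hc => ?_⟩
  have hconj : h * g * h⁻¹ = g := by
    rw [← hc, mul_inv_cancel_right]
  constructor
  · intro η
    rw [key η, hconj]
  · intro _
    rw [map_smul, LinearMap.trace_id]
    simp [smul_eq_mul]
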